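/- Let n ≥ 1 and let R : ℂⁿ × ℂⁿ × ℂⁿ × ℂⁿ → ℂ be a curvature-type form satisfying the Hermitian symmetry conj( R(X, Y, Z, W) ) = R(Y, X, W, Z) for all X, Y, Z, W ∈ ℂⁿ. Then the following are equivalent: (a) Re( R(v, v, v, v) ) < 0 for every nonzero vector v ∈ ℂⁿ; (b) for every orthonormal basis (e₁, …, eₙ) of ℂⁿ and every vector b ∈ ℝⁿ with b_i ≥ 0 for all i and b ≠ 0, one has Σ_{i,k=1}^{n} Re( R(e_i, e_i, e_k, e_k) + R(e_i, e_k, e_k, e_i) ) b_i b_k < 0. -/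

import Mathlib

open scoped ComplexConjugate BigOperators

/-- A curvature-type form on `ℂⁿ`: ℂ-linear in the 1st and 3rd arguments and
conjugate-linear (additive, with `R(…, c•X, …) = conj c * R(…, X, …)`) in the
2nd and 4th arguments. -/
structure CurvatureForm (n : ℕ) where
  R : EuclideanSpace ℂ (Fin n) → EuclideanSpace ℂ (Fin n) → EuclideanSpace ℂ (Fin n) →
      EuclideanSpace ℂ (Fin n) → ℂ
  add_fst : ∀ X X' Y Z W, R (X + X') Y Z W = R X Y Z W + R X' Y Z W
  smul_fst : ∀ (c : ℂ) (X Y Z W), R (c • X) Y Z W = c * R X Y Z W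
  add_snd : ∀ X Y Y' Z W, R X (Y + Y') Z W = R X Y Z W + R X Y' Z W
  smul_snd : ∀ (c : ℂ) (X Y Z W), R X (c • Y) Z W = conj c * R X Y Z W
  add_trd : ∀ X Y Z Z' W, R X Y (Z + Z') W = R X Y Z W + R X Y Z' W
  smul_trd : ∀ (c : ℂ) (X Y Z W), R X Y (c • Z) W = c * R X Y Z W
  add_fth : ∀ X Y Z W W', R X Y Z (W + W') = R X Y Z W + R X Y Z W'
  smul_fth : ∀ (c : ℂ) (X Y Z W), R X Y Z (c • W) = conj c * R X Y Z W

lemma I_pow_mod (m : ℕ) : Complex.I ^ m = Complex.I ^ (m % 4) := by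
  conv_lhs => rw [← Nat.div_add_mod m 4]
  rw [pow_add, pow_mul, Complex.I_pow_four, one_pow, one_mul]

noncomputable def ph (s : ZMod 4) : ℂ := Complex.I ^ s.val

lemma ph_add (a b : ZMod 4) : ph (a + b) = ph a * ph b := by
  rw [ph, ph, ph, ZMod.val_add, ← I_pow_mod, pow_add]

lemma ph_zero : ph 0 = 1 := by simp [ph]
lemma ph_one : ph 1 = Complex.I := by rw [ph, show (1 : ZMod 4).val = 1 from rfl, pow_one]
lemma ph_two : ph 2 = -1 := by rw [ph, show (2 : ZMod 4).val = 2 from rfl, Complex.I_sq]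
lemma ph_three : ph 3 = -Complex.I := by
  rw [ph, show (3 : ZMod 4).val = 3 from rfl, pow_succ, Complex.I_sq]; ring

lemma ph_ne_zero (a : ZMod 4) : ph a ≠ 0 := pow_ne_zero _ Complex.I_ne_zero

lemma ph_conj (a : ZMod 4) : conj (ph a) = ph (-a) := by
  have h1 : conj (ph a) = (ph a)⁻¹ := by
    rw [ph, map_pow, Complex.conj_I, ← Complex.inv_I, inv_pow]
  have h2 : ph a * ph (-a) = 1 := by
    rw [← ph_add, add_neg_cancel, ph_zero]
  rw [h1, inv_eq_of_mul_eq_one_right h2]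

lemma zmod4_sum (f : ZMod 4 → ℂ) : ∑ s : ZMod 4, f s = f 0 + f 1 + f 2 + f 3 := by
  rw [show (Finset.univ : Finset (ZMod 4)) = {0,1,2,3} by decide]
  rw [Finset.sum_insert (by decide), Finset.sum_insert (by decide),
    Finset.sum_insert (by decide), Finset.sum_singleton]
  ring

lemma sum_ph (m : ZMod 4) : ∑ s : ZMod 4, ph (m * s) = if m = 0 then 4 else 0 := by
  have h4 : m = 0 ∨ m = 1 ∨ m = 2 ∨ m = 3 := by revert m; decide
  rw [zmod4_sum]
  rcases h4 with h | h | h | h <;> subst h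
  · rw [show ((0:ZMod 4)*0) = 0 by decide, show ((0:ZMod 4)*1) = 0 by decide,
      show ((0:ZMod 4)*2) = 0 by decide, show ((0:ZMod 4)*3) = 0 by decide,
      if_pos rfl, ph_zero]
    norm_num
  · rw [show ((1:ZMod 4)*0) = 0 by decide, show ((1:ZMod 4)*1) = 1 by decide,
      show ((1:ZMod 4)*2) = 2 by decide, show ((1:ZMod 4)*3) = 3 by decide,
      if_neg (by decide : ¬((1:ZMod 4) = 0)), ph_zero, ph_one, ph_two, ph_three]
    ring
  · rw [show ((2:ZMod 4)*0) = 0 by decide, show ((2:ZMod 4)*1) = 2 by decide,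
      show ((2:ZMod 4)*2) = 0 by decide, show ((2:ZMod 4)*3) = 2 by decide,
      if_neg (by decide : ¬((2:ZMod 4) = 0)), ph_zero, ph_two]
    ring
  · rw [show ((3:ZMod 4)*0) = 0 by decide, show ((3:ZMod 4)*1) = 3 by decide,
      show ((3:ZMod 4)*2) = 2 by decide, show ((3:ZMod 4)*3) = 1 by decide,
      if_neg (by decide : ¬((3:ZMod 4) = 0)), ph_zero, ph_one, ph_two, ph_three]
    ring


namespace CurvatureForm
variable {n : ℕ} (R : CurvatureForm n)

lemma zero_fst (Y Z W) : R.R 0 Y Z W = 0 := by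
  have h := R.smul_fst 0 0 Y Z W; simpa using h
lemma zero_snd (X Z W) : R.R X 0 Z W = 0 := by
  have h := R.smul_snd 0 X 0 Z W; simpa using h
lemma zero_trd (X Y W) : R.R X Y 0 W = 0 := by
  have h := R.smul_trd 0 X Y 0 W; simpa using h
lemma zero_fth (X Y Z) : R.R X Y Z 0 = 0 := by
  have h := R.smul_fth 0 X Y Z 0; simpa using h

lemma sum_fst {ι : Type*} (s : Finset ι) (f : ι → EuclideanSpace ℂ (Fin n)) (Y Z W) :
    R.R (∑ j ∈ s, f j) Y Z W = ∑ j ∈ s, R.R (f j) Y Z W := by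
  classical
  induction s using Finset.cons_induction with
  | empty => simpa using R.zero_fst Y Z W
  | cons a s ha ih => rw [Finset.sum_cons, R.add_fst, ih, Finset.sum_cons]

lemma sum_snd {ι : Type*} (s : Finset ι) (X) (f : ι → EuclideanSpace ℂ (Fin n)) (Z W) :
    R.R X (∑ j ∈ s, f j) Z W = ∑ j ∈ s, R.R X (f j) Z W := by
  classical
  induction s using Finset.cons_induction with
  | empty => simpa using R.zero_snd X Z W
  | cons a s ha ih => rw [Finset.sum_cons, R.add_snd, ih, Finset.sum_cons]

lemma sum_trd {ι : Type*} (s : Finset ι) (X Y) (f : ι → EuclideanSpace ℂ (Fin n)) (W) :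
    R.R X Y (∑ j ∈ s, f j) W = ∑ j ∈ s, R.R X Y (f j) W := by
  classical
  induction s using Finset.cons_induction with
  | empty => simpa using R.zero_trd X Y W
  | cons a s ha ih => rw [Finset.sum_cons, R.add_trd, ih, Finset.sum_cons]

lemma sum_fth {ι : Type*} (s : Finset ι) (X Y Z) (f : ι → EuclideanSpace ℂ (Fin n)) :
    R.R X Y Z (∑ j ∈ s, f j) = ∑ j ∈ s, R.R X Y Z (f j) := by
  classical
  induction s using Finset.cons_induction with
  | empty => simpa using R.zero_fth X Y Z
  | cons a s ha ih => rw [Finset.sum_cons, R.add_fth, ih, Finset.sum_cons]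

lemma expand (e : Fin n → EuclideanSpace ℂ (Fin n)) (c : Fin n → ℂ) :
    R.R (∑ j, c j • e j) (∑ j, c j • e j) (∑ j, c j • e j) (∑ j, c j • e j)
      = ∑ i1, ∑ i2, ∑ i3, ∑ i4, c i1 * conj (c i2) * c i3 * conj (c i4) *
          R.R (e i1) (e i2) (e i3) (e i4) := by
  rw [R.sum_fst Finset.univ (fun j => c j • e j)]
  refine Finset.sum_congr rfl fun i1 _ => ?_
  rw [R.smul_fst, R.sum_snd Finset.univ _ (fun j => c j • e j), Finset.mul_sum]
  refine Finset.sum_congr rfl fun i2 _ => ?_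
  rw [R.smul_snd, R.sum_trd Finset.univ _ _ (fun j => c j • e j), Finset.mul_sum, Finset.mul_sum]
  refine Finset.sum_congr rfl fun i3 _ => ?_
  rw [R.smul_trd, R.sum_fth Finset.univ _ _ _ (fun j => c j • e j), Finset.mul_sum, Finset.mul_sum]
  rw [Finset.mul_sum]
  refine Finset.sum_congr rfl fun i4 _ => ?_
  rw [R.smul_fth]
  ring

end CurvatureForm

section scratch
variable {n : ℕ}

lemma delta_iff (i1 i2 i3 i4 : Fin n) :
    (∀ j, (if i1 = j then (1 : ZMod 4) else 0) - (if i2 = j then 1 else 0)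
        + (if i3 = j then 1 else 0) - (if i4 = j then 1 else 0) = 0)
      ↔ ((i1 = i2 ∧ i3 = i4) ∨ (i1 = i4 ∧ i2 = i3)) := by
  constructor
  · intro h
    by_cases h12 : i1 = i2
    · left
      refine ⟨h12, ?_⟩
      by_cases h34 : i3 = i4
      · exact h34
      · exfalso
        have h3 := h i3
        subst h12
        rw [if_pos rfl, if_neg (Ne.symm h34)] at h3
        simp only [sub_self, zero_add, sub_zero] at h3
        exact absurd h3 (by decide)
    · right
      by_cases h14 : i1 = i4
      · refine ⟨h14, ?_⟩
        by_cases h23 : i2 = i3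
        · exact h23
        · exfalso
          have h2 := h i2
          subst h14
          rw [if_neg h12, if_pos rfl, if_neg (fun hh : i3 = i2 => h23 hh.symm)] at h2
          exact absurd h2 (by decide)
      · exfalso
        have h1 := h i1
        rw [if_pos rfl, if_neg (fun hh : i2 = i1 => h12 hh.symm),
          if_neg (fun hh : i4 = i1 => h14 hh.symm)] at h1
        by_cases h31 : i3 = i1
        · rw [if_pos h31] at h1
          exact absurd h1 (by decide)
        · rw [if_neg h31] at h1
          exact absurd h1 (by decide)
  · rintro (⟨h1, h2⟩ | ⟨h1, h2⟩) j <;> subst h1 <;> subst h2 <;> ring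

end scratch


section phase
variable {n : ℕ}

lemma ph_sum_prod {ι : Type*} (s : Finset ι) (g : ι → ZMod 4) :
    ph (∑ j ∈ s, g j) = ∏ j ∈ s, ph (g j) := by
  classical
  induction s using Finset.cons_induction with
  | empty => simpa using ph_zero
  | cons a s ha ih => rw [Finset.sum_cons, ph_add, ih, Finset.prod_cons]

lemma phase_sum (i1 i2 i3 i4 : Fin n) :
    ∑ t : Fin n → ZMod 4, ph (t i1) * conj (ph (t i2)) * ph (t i3) * conj (ph (t i4))
      = if (i1 = i2 ∧ i3 = i4) ∨ (i1 = i4 ∧ i2 = i3) then (4:ℂ)^n else 0 := by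
  classical
  set mm : Fin n → ZMod 4 := fun j =>
    (if i1 = j then 1 else 0) - (if i2 = j then 1 else 0)
      + (if i3 = j then 1 else 0) - (if i4 = j then 1 else 0) with hmm
  have step1 : ∀ t : Fin n → ZMod 4,
      ph (t i1) * conj (ph (t i2)) * ph (t i3) * conj (ph (t i4))
        = ∏ j, ph (mm j * t j) := by
    intro t
    have hsum : ∑ j, mm j * t j = t i1 - t i2 + t i3 - t i4 := by
      simp [hmm, sub_mul, add_mul, ite_mul, one_mul, zero_mul,
        Finset.sum_sub_distrib, Finset.sum_add_distrib, Finset.sum_ite_eq]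
    rw [← ph_sum_prod, hsum, ph_conj, ph_conj,
      show t i1 - t i2 + t i3 - t i4 = t i1 + (-(t i2)) + t i3 + (-(t i4)) by ring,
      ph_add, ph_add, ph_add]
  rw [Finset.sum_congr rfl fun t _ => step1 t]
  rw [← Fintype.prod_sum (fun j s => ph (mm j * s))]
  rw [Finset.prod_congr rfl fun j _ => sum_ph (mm j)]
  by_cases hall : ∀ j, mm j = 0
  · rw [if_pos ((delta_iff i1 i2 i3 i4).mp hall)]
    rw [Finset.prod_congr rfl fun j _ => if_pos (hall j)]
    simp
  · rw [if_neg (fun hc => hall ((delta_iff i1 i2 i3 i4).mpr hc))]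
    obtain ⟨j0, hj0⟩ := not_forall.mp hall
    exact Finset.prod_eq_zero (Finset.mem_univ j0) (if_neg hj0)

end phase

lemma ite_split (i1 i2 i3 i4 : Fin n) (x : ℂ) :
    (if (i1 = i2 ∧ i3 = i4) ∨ (i1 = i4 ∧ i2 = i3) then x else 0)
      = (if i1 = i2 then (if i3 = i4 then x else 0) else 0)
        + (if i1 = i4 then (if i2 = i3 then x else 0) else 0)
        - (if i1 = i4 then (if i1 = i3 then (if i1 = i2 then x else 0) else 0) else 0) := by
  by_cases h12 : i1 = i2 <;> by_cases h34 : i3 = i4 <;> by_cases h14 : i1 = i4 <;>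
    by_cases h23 : i2 = i3 <;> simp_all <;> (try (intros; simp_all)) <;> (try ring)

lemma key (R : CurvatureForm n) (e : Fin n → EuclideanSpace ℂ (Fin n)) (c : Fin n → ℝ) :
    ∑ t : Fin n → ZMod 4,
        R.R (∑ j, ((c j : ℂ) * ph (t j)) • e j) (∑ j, ((c j : ℂ) * ph (t j)) • e j)
          (∑ j, ((c j : ℂ) * ph (t j)) • e j) (∑ j, ((c j : ℂ) * ph (t j)) • e j)
      = (4:ℂ)^n *
        ((∑ i, ∑ k, (((c i * c i * c k * c k : ℝ)) : ℂ) *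
            (R.R (e i) (e i) (e k) (e k) + R.R (e i) (e k) (e k) (e i)))
          - ∑ i, (((c i * c i * c i * c i : ℝ)) : ℂ) * R.R (e i) (e i) (e i) (e i)) := by
  classical
  have h1 : ∑ t : Fin n → ZMod 4,
        R.R (∑ j, ((c j : ℂ) * ph (t j)) • e j) (∑ j, ((c j : ℂ) * ph (t j)) • e j)
          (∑ j, ((c j : ℂ) * ph (t j)) • e j) (∑ j, ((c j : ℂ) * ph (t j)) • e j)
      = ∑ i1, ∑ i2, ∑ i3, ∑ i4,
          (if (i1 = i2 ∧ i3 = i4) ∨ (i1 = i4 ∧ i2 = i3) then (4:ℂ)^n else 0) *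
            ((c i1 : ℂ) * c i2 * c i3 * c i4 * R.R (e i1) (e i2) (e i3) (e i4)) := by
    rw [Finset.sum_congr rfl fun t _ => R.expand e (fun j => (c j : ℂ) * ph (t j))]
    rw [Finset.sum_comm]
    refine Finset.sum_congr rfl fun i1 _ => ?_
    rw [Finset.sum_comm]
    refine Finset.sum_congr rfl fun i2 _ => ?_
    rw [Finset.sum_comm]
    refine Finset.sum_congr rfl fun i3 _ => ?_
    rw [Finset.sum_comm]
    refine Finset.sum_congr rfl fun i4 _ => ?_
    have : ∀ t : Fin n → ZMod 4,
        (c i1 : ℂ) * ph (t i1) * conj ((c i2 : ℂ) * ph (t i2)) * ((c i3 : ℂ) * ph (t i3)) *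
            conj ((c i4 : ℂ) * ph (t i4)) * R.R (e i1) (e i2) (e i3) (e i4)
          = ((c i1 : ℂ) * c i2 * c i3 * c i4 * R.R (e i1) (e i2) (e i3) (e i4)) *
              (ph (t i1) * conj (ph (t i2)) * ph (t i3) * conj (ph (t i4))) := by
      intro t
      simp only [map_mul, Complex.conj_ofReal]
      ring
    rw [Finset.sum_congr rfl fun t _ => this t, ← Finset.mul_sum, phase_sum]
    ring
  rw [h1]
  simp only [ite_split, add_mul, sub_mul, zero_mul, ite_mul,
    Finset.sum_add_distrib, Finset.sum_sub_distrib,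
    Finset.sum_ite_irrel, Finset.sum_ite_eq, Finset.mem_univ, if_true,
    Finset.sum_const_zero]
  rw [mul_sub, Finset.mul_sum, Finset.mul_sum]
  congr 1
  · rw [← Finset.sum_add_distrib]
    refine Finset.sum_congr rfl fun i _ => ?_
    rw [Finset.mul_sum, ← Finset.sum_add_distrib]
    refine Finset.sum_congr rfl fun k _ => ?_
    push_cast
    ring
  · refine Finset.sum_congr rfl fun i _ => ?_
    push_cast
    ring


/-- Characterization of `HSC < 0` (paper, §2): under the Hermitian symmetry
`conj (R X Y Z W) = R Y X W Z`, negativity of `R(v,v,v,v)` on nonzero vectors is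
equivalent to negativity of the quadratic form
`Σ Re(R(eᵢ,eᵢ,e_k,e_k) + R(eᵢ,e_k,e_k,eᵢ)) bᵢ b_k` on nonzero nonnegative vectors,
in every unitary frame. -/
theorem stmt5 (n : ℕ) (hn : 1 ≤ n) (R : CurvatureForm n)
    (hsym : ∀ X Y Z W, conj (R.R X Y Z W) = R.R Y X W Z) :
    (∀ v : EuclideanSpace ℂ (Fin n), v ≠ 0 → (R.R v v v v).re < 0) ↔
      (∀ (e : OrthonormalBasis (Fin n) ℂ (EuclideanSpace ℂ (Fin n))) (b : Fin n → ℝ),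
        (∀ i, 0 ≤ b i) → b ≠ 0 →
          ∑ i, ∑ k,
            (R.R (e i) (e i) (e k) (e k) + R.R (e i) (e k) (e k) (e i)).re *
              b i * b k < 0) := by
  constructor
  · intro hneg e b hb hbne
    classical
    set c : Fin n → ℝ := fun i => Real.sqrt (b i) with hc
    have hkey := key R (fun i => e i) c
    obtain ⟨i0, hi0⟩ : ∃ i, b i ≠ 0 := by
      by_contra h
      push_neg at h
      exact hbne (funext fun i => h i)
    have hbi0 : 0 < b i0 := lt_of_le_of_ne (hb i0) (Ne.symm hi0)
    have hvne : ∀ t : Fin n → ZMod 4, (∑ j, ((c j : ℂ) * ph (t j)) • e j) ≠ 0 := by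
      intro t h0
      have hin := e.orthonormal.inner_right_fintype (fun j => (c j : ℂ) * ph (t j)) i0
      rw [h0, inner_zero_right] at hin
      have hc0 : (c i0 : ℂ) ≠ 0 := by
        simp only [hc, ne_eq, Complex.ofReal_eq_zero]
        positivity
      exact (mul_ne_zero hc0 (ph_ne_zero _)) hin.symm
    have hn4 : (0:ℝ) < 4 ^ n := by positivity
    have hsumneg : (∑ t : Fin n → ZMod 4,
        R.R (∑ j, ((c j : ℂ) * ph (t j)) • e j) (∑ j, ((c j : ℂ) * ph (t j)) • e j)
          (∑ j, ((c j : ℂ) * ph (t j)) • e j) (∑ j, ((c j : ℂ) * ph (t j)) • e j)).re < 0 := by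
      rw [Complex.re_sum]
      have := Finset.sum_lt_sum_of_nonempty (Finset.univ_nonempty)
        (fun t (_ : t ∈ (Finset.univ : Finset (Fin n → ZMod 4))) => hneg _ (hvne t))
      simpa using this
    have hdiag : (∑ i, (((c i * c i * c i * c i : ℝ)) : ℂ) *
        R.R (e i) (e i) (e i) (e i)).re ≤ 0 := by
      rw [Complex.re_sum]
      apply Finset.sum_nonpos
      intro i _
      rw [Complex.re_ofReal_mul]
      apply mul_nonpos_of_nonneg_of_nonpos
      · positivity
      · exact le_of_lt (hneg _ (e.orthonormal.ne_zero i))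
    have hre := congrArg Complex.re hkey
    rw [show ((4:ℂ)^n) = (((4:ℝ)^n : ℝ) : ℂ) by push_cast; ring, Complex.re_ofReal_mul,
      Complex.sub_re] at hre
    have hT : (∑ i, ∑ k, (((c i * c i * c k * c k : ℝ)) : ℂ) *
          (R.R (e i) (e i) (e k) (e k) + R.R (e i) (e k) (e k) (e i))).re
        = ∑ i, ∑ k, (R.R (e i) (e i) (e k) (e k) + R.R (e i) (e k) (e k) (e i)).re
            * b i * b k := by
      rw [Complex.re_sum]
      refine Finset.sum_congr rfl fun i _ => ?_
      rw [Complex.re_sum]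
      refine Finset.sum_congr rfl fun k _ => ?_
      have hcc : ∀ m, c m * c m = b m := fun m => Real.mul_self_sqrt (hb m)
      rw [Complex.re_ofReal_mul, show c i * c i * c k * c k = b i * b k by
        rw [mul_assoc (c i * c i), hcc i, hcc k]]
      ring
    rw [hT] at hre
    nlinarith [hre, hsumneg, hdiag]
  · intro H v hv
    have hvn : (‖v‖ : ℂ) ≠ 0 := by
      simp [norm_ne_zero_iff.mpr hv]
    set u : EuclideanSpace ℂ (Fin n) := ((‖v‖ : ℂ))⁻¹ • v with hu
    have hun : ‖u‖ = 1 := by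
      rw [hu, norm_smul]
      simp [norm_ne_zero_iff.mpr hv]
    let i0 : Fin n := ⟨0, hn⟩
    have hcard : Module.finrank ℂ (EuclideanSpace ℂ (Fin n)) = Fintype.card (Fin n) := by
      simp [finrank_euclideanSpace]
    have horth : Orthonormal ℂ (({i0} : Set (Fin n)).restrict (fun _ => u)) := by
      constructor
      · intro i; exact hun
      · intro i j hij
        exfalso
        apply hij
        apply Subtype.ext
        have hi : (i : Fin n) = i0 := i.2
        have hj : (j : Fin n) = i0 := j.2
        rw [hi, hj]
    obtain ⟨e, he⟩ := Orthonormal.exists_orthonormalBasis_extension_of_card_eq hcard horth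
    have he0 : e i0 = u := he i0 rfl
    have hH := H e (fun i => if i = i0 then 1 else 0)
      (fun i => by by_cases h : i = i0 <;> simp [h])
      (fun h0 => by simpa using congrFun h0 i0)
    simp only [mul_ite, mul_one, mul_zero, ite_mul, zero_mul, one_mul,
      Finset.sum_ite_eq', Finset.mem_univ, if_true] at hH
    rw [he0] at hH
    have huneg : (R.R u u u u).re < 0 := by
      rw [Complex.add_re] at hH
      linarith
    have hvu : v = ((‖v‖ : ℂ)) • u := by
      rw [hu, smul_smul, mul_inv_cancel₀ hvn, one_smul]
    have hR : R.R v v v v = ((‖v‖ : ℂ))^4 * R.R u u u u := by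
      conv_lhs => rw [hvu]
      rw [R.smul_fst, R.smul_snd, R.smul_trd, R.smul_fth, Complex.conj_ofReal]
      ring
    rw [hR, show ((‖v‖ : ℂ))^4 = ((‖v‖^4 : ℝ) : ℂ) by push_cast; ring,
      Complex.re_ofReal_mul]
    have hnv : (0:ℝ) < ‖v‖ := norm_pos_iff.mpr hv
    have : (0:ℝ) < ‖v‖^4 := by positivity
    nlinarith [huneg, this]
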